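/- arXiv:1901.03182 — 2 statements merged into one kernel-verified Lean document; each statement's English description precedes it below -/
import Mathlib

section
/- Assume H1 and the prior H2, and let Č_γ(z) := Σ_{δ∈Δ} ω_δ ∫_{ℝ^p} q_{δ,θ_δ}(z) N(0, B_δ)(dθ) denote the normalizing constant of the quasi-posterior Π̌(· | z). Then for every z in the event 𝓔 (in particular, whenever v̄(δ⋆) ≤ κ̄), Č_γ(z) ≥ ω_{δ⋆} q_{δ⋆,θ⋆}(z) e^{−(ρ²/2)‖θ⋆‖₂²} (ρ² / (nκ̄/λ + ρ²))^{s⋆/2}. -/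
open MeasureTheory Real

/-- Number of `true` coordinates (`‖δ‖₀` for `δ ∈ {0,1}^d`, resp. `‖T_δ‖₀`). -/
def card0 {d : ℕ} (δ : Fin d → Bool) : ℕ := (Finset.univ.filter fun j => δ j = true).card

/-- The sparsity structure `δ⋆` of `θ⋆`: `δ⋆_j = 𝟙(|θ⋆_j| > 0)`. -/
noncomputable def deltaStar {p : ℕ} (θs : Fin p → ℝ) : Fin p → Bool :=
  fun j => decide (θs j ≠ 0)

/-- The quadratic form `u ↦ u′(M_δ′M_δ)u = ‖W_δ′ X u‖₂²`, where `M_δ = W_δ′X` and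
`W_δ` keeps the columns `ℓ` of `W` with `(T_δ)_ℓ = 1`. -/
def quadForm {n p q : ℕ} (T : (Fin p → Bool) → Fin q → Bool)
    (X : Matrix (Fin n) (Fin p) ℝ) (W : Matrix (Fin n) (Fin q) ℝ)
    (δ : Fin p → Bool) (u : Fin p → ℝ) : ℝ :=
  ∑ ℓ, if T δ ℓ then (∑ i, W i ℓ * (∑ j, X i j * u j)) ^ 2 else 0

/-- Restricted maximal eigenvalue `v̄(δ)` of `M_δ′M_δ/n` over `ℝ^p_δ`. -/
noncomputable def vbar (n : ℕ) {p q : ℕ} (T : (Fin p → Bool) → Fin q → Bool)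
    (X : Matrix (Fin n) (Fin p) ℝ) (W : Matrix (Fin n) (Fin q) ℝ)
    (δ : Fin p → Bool) : ℝ :=
  sSup {r | ∃ u : Fin p → ℝ, u ≠ 0 ∧ (∀ j, δ j = false → u j = 0) ∧
    r = quadForm T X W δ u / ((n : ℝ) * ∑ j, u j ^ 2)}

/-- Restricted minimal eigenvalue `v̲(δ)` of `M_δ′M_δ/n` over `ℝ^p_δ`. -/
noncomputable def vlow (n : ℕ) {p q : ℕ} (T : (Fin p → Bool) → Fin q → Bool)
    (X : Matrix (Fin n) (Fin p) ℝ) (W : Matrix (Fin n) (Fin q) ℝ)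
    (δ : Fin p → Bool) : ℝ :=
  sInf {r | ∃ u : Fin p → ℝ, u ≠ 0 ∧ (∀ j, δ j = false → u j = 0) ∧
    r = quadForm T X W δ u / ((n : ℝ) * ∑ j, u j ^ 2)}

/-- `t̄ = max_{‖δ‖₀ ≤ s̄} ‖T_δ‖₀`: the maximal number of selected instruments. -/
def tmax (p q sbar : ℕ) (T : (Fin p → Bool) → Fin q → Bool) : ℕ :=
  (Finset.univ.filter fun δ : Fin p → Bool => card0 δ ≤ sbar).sup fun δ => card0 (T δ)

/-- The event `𝓔`. -/
def eventE (n p q sbar : ℕ) (σ0 κ1 κb κl : ℝ)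
    (T : (Fin p → Bool) → Fin q → Bool) (θs : Fin p → ℝ)
    (y : Fin n → ℝ) (X : Matrix (Fin n) (Fin p) ℝ) (W : Matrix (Fin n) (Fin q) ℝ) : Prop :=
  (∀ k, |∑ i, W i k * (y i - ∑ j, X i j * θs j)|
      ≤ σ0 * Real.sqrt (2 * Real.log ((p : ℝ) * (q : ℝ)))) ∧
  vbar n T X W (deltaStar θs) ≤ κb ∧
  (∀ δ : Fin p → Bool, card0 δ ≤ sbar → κl ≤ vlow n T X W δ) ∧
  (∀ δ : Fin p → Bool, card0 δ ≤ sbar → ∀ j : Fin p,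
    (1 / Real.sqrt (n : ℝ)) *
        Real.sqrt (∑ ℓ, (if T δ ℓ then ∑ i, W i ℓ * X i j else 0) ^ 2) ≤ κ1)

/-- The quasi-likelihood
`q_{δ,θ}(z) = exp(−(1/2)(y−Xθ)′WΛ_δW′(y−Xθ))`, `Λ_δ = (1/λ)diag(T_δ)`, i.e.
`q_{δ,θ}(z) = exp(−(1/(2λ)) Σ_{ℓ : (T_δ)_ℓ = 1} ⟨W_ℓ, y − Xθ⟩²)`. -/
noncomputable def qlik {n p q : ℕ} (lam : ℝ) (T : (Fin p → Bool) → Fin q → Bool)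
    (y : Fin n → ℝ) (X : Matrix (Fin n) (Fin p) ℝ) (W : Matrix (Fin n) (Fin q) ℝ)
    (δ : Fin p → Bool) (θ : Fin p → ℝ) : ℝ :=
  Real.exp (-(1 / (2 * lam)) *
    ∑ ℓ, if T δ ℓ then (∑ i, W i ℓ * (y i - ∑ j, X i j * θ j)) ^ 2 else 0)

/-- `θ_δ`: the vector `θ` with coordinates outside `δ` set to `0`. -/
def restr {d : ℕ} (δ : Fin d → Bool) (θ : Fin d → ℝ) : Fin d → ℝ :=
  fun j => if δ j then θ j else 0

/-- Density at `x` of the centered real Gaussian with variance `v`. -/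
noncomputable def gpdf (v x : ℝ) : ℝ :=
  Real.exp (-(x ^ 2) / (2 * v)) / Real.sqrt (2 * Real.pi * v)

/-- Density of the prior `N(0, B_δ)`: independent coordinates, `N(0,1/ρ²)` where
`δ_j = 1` and `N(0,γ)` where `δ_j = 0`. -/
noncomputable def gdens {p : ℕ} (ρ γ : ℝ) (δ : Fin p → Bool) (θ : Fin p → ℝ) : ℝ :=
  ∏ j, gpdf (if δ j then 1 / ρ ^ 2 else γ) (θ j)

/-- Unnormalized spike-and-slab model weights:
`ω_δ ∝ 𝗊^{‖δ‖₀}(1−𝗊)^{p−‖δ‖₀} 𝟙{‖δ‖₀ ≤ s̄}` with `𝗊 = p^{−(1+u)}`. -/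
noncomputable def priorw (p sbar : ℕ) (u : ℝ) (δ : Fin p → Bool) : ℝ :=
  if card0 δ ≤ sbar then
    ((p : ℝ) ^ (-(1 + u))) ^ (card0 δ) * (1 - (p : ℝ) ^ (-(1 + u))) ^ (p - card0 δ)
  else 0

/-- The quasi-posterior distribution
`Π̌(δ, dθ | z) ∝ ω_δ q_{δ,θ_δ}(z) N(0,B_δ)(dθ)` on `{0,1}^p × ℝ^p`,
evaluated on a set `S`. -/
noncomputable def postProb (n p q sbar : ℕ) (u lam ρ γ : ℝ)
    (T : (Fin p → Bool) → Fin q → Bool)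
    (y : Fin n → ℝ) (X : Matrix (Fin n) (Fin p) ℝ) (W : Matrix (Fin n) (Fin q) ℝ)
    (S : Set ((Fin p → Bool) × (Fin p → ℝ))) : ℝ :=
  (∑ δ : Fin p → Bool, priorw p sbar u δ *
      ∫ θ in {θ : Fin p → ℝ | (δ, θ) ∈ S},
        qlik lam T y X W δ (restr δ θ) * gdens ρ γ δ θ) /
  (∑ δ : Fin p → Bool, priorw p sbar u δ *
      ∫ θ : Fin p → ℝ, qlik lam T y X W δ (restr δ θ) * gdens ρ γ δ θ)

/-- Normalized prior weights `ω_δ`. -/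
noncomputable def priorOmega (p sbar : ℕ) (u : ℝ) (δ : Fin p → Bool) : ℝ :=
  priorw p sbar u δ / ∑ δ' : Fin p → Bool, priorw p sbar u δ'


/-! ### Auxiliary lemmas -/

lemma gpdf_eq (v : ℝ) :
    gpdf v = fun x => Real.exp (-(1 / (2 * v)) * x ^ 2) / Real.sqrt (2 * Real.pi * v) := by
  funext x; unfold gpdf; rw [show -(x ^ 2) / (2 * v) = -(1 / (2 * v)) * x ^ 2 by ring]

lemma gpdf_nonneg (v x : ℝ) : 0 ≤ gpdf v x :=
  div_nonneg (Real.exp_pos _).le (Real.sqrt_nonneg _)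

lemma gpdf_integrable {v : ℝ} (hv : 0 < v) : Integrable (gpdf v) := by
  rw [gpdf_eq]
  exact (integrable_exp_neg_mul_sq (by positivity)).div_const _

lemma gpdf_integral {v : ℝ} (hv : 0 < v) : ∫ x, gpdf v x = 1 := by
  rw [gpdf_eq, integral_div, integral_gaussian,
    show π / (1 / (2 * v)) = 2 * π * v by field_simp,
    div_self (by positivity : Real.sqrt (2 * π * v) ≠ 0)]

lemma gdens_nonneg {p : ℕ} (ρ γ : ℝ) (δ : Fin p → Bool) (θ : Fin p → ℝ) :
    0 ≤ gdens ρ γ δ θ :=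
  Finset.prod_nonneg fun j _ => gpdf_nonneg _ _

lemma gdens_eq {p : ℕ} (ρ γ : ℝ) (δ : Fin p → Bool) (θ : Fin p → ℝ) :
    gdens ρ γ δ θ = (∏ j, (Real.sqrt (2 * π * (if δ j then 1 / ρ ^ 2 else γ)))⁻¹) *
      Real.exp (∑ j, -((θ j) ^ 2) / (2 * (if δ j then 1 / ρ ^ 2 else γ))) := by
  unfold gdens gpdf
  rw [Real.exp_sum, ← Finset.prod_mul_distrib]
  exact Finset.prod_congr rfl fun j _ => by rw [div_eq_mul_inv, mul_comm]

lemma gdens_integrable {p : ℕ} {ρ γ : ℝ} (hρ : 0 < ρ) (hγ : 0 < γ) (δ : Fin p → Bool) :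
    Integrable (gdens ρ γ δ) := by
  have h : ∀ j : Fin p, (0:ℝ) < if δ j then 1 / ρ ^ 2 else γ := fun j => by
    split <;> positivity
  exact Integrable.fintype_prod (f := fun j => gpdf (if δ j then 1 / ρ ^ 2 else γ))
    fun j => gpdf_integrable (h j)

lemma gdens_integral {p : ℕ} {ρ γ : ℝ} (hρ : 0 < ρ) (hγ : 0 < γ) (δ : Fin p → Bool) :
    ∫ θ : Fin p → ℝ, gdens ρ γ δ θ = 1 := by
  have h : ∀ j : Fin p, (0:ℝ) < if δ j then 1 / ρ ^ 2 else γ := fun j => by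
    split <;> positivity
  unfold gdens
  rw [integral_fintype_prod_volume_eq_prod (f := fun j x => gpdf (if δ j then 1 / ρ ^ 2 else γ) x)]
  simp only [fun j : Fin p => gpdf_integral (h j)]
  exact Finset.prod_const_one

lemma qlik_pos {n p q : ℕ} (lam : ℝ) (T : (Fin p → Bool) → Fin q → Bool)
    (y : Fin n → ℝ) (X : Matrix (Fin n) (Fin p) ℝ) (W : Matrix (Fin n) (Fin q) ℝ)
    (δ : Fin p → Bool) (θ : Fin p → ℝ) : 0 < qlik lam T y X W δ θ := Real.exp_pos _

lemma qlik_le_one {n p q : ℕ} {lam : ℝ} (hlam : 0 < lam) (T : (Fin p → Bool) → Fin q → Bool)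
    (y : Fin n → ℝ) (X : Matrix (Fin n) (Fin p) ℝ) (W : Matrix (Fin n) (Fin q) ℝ)
    (δ : Fin p → Bool) (θ : Fin p → ℝ) : qlik lam T y X W δ θ ≤ 1 := by
  unfold qlik
  rw [Real.exp_le_one_iff]
  have h1 : 0 ≤ ∑ ℓ, if T δ ℓ then (∑ i, W i ℓ * (y i - ∑ j, X i j * θ j)) ^ 2 else 0 :=
    Finset.sum_nonneg fun ℓ _ => by positivity
  have h2 : -(1 / (2 * lam)) ≤ 0 := by rw [neg_nonpos]; positivity
  exact mul_nonpos_of_nonpos_of_nonneg h2 h1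

lemma exp_avg (a b : ℝ) : 2 * Real.exp ((a + b) / 2) ≤ Real.exp a + Real.exp b := by
  have h := sq_nonneg (Real.exp (a / 2) - Real.exp (b / 2))
  have ha : Real.exp (a / 2) * Real.exp (a / 2) = Real.exp a := by
    rw [← Real.exp_add]; ring_nf
  have hb : Real.exp (b / 2) * Real.exp (b / 2) = Real.exp b := by
    rw [← Real.exp_add]; ring_nf
  have hab : Real.exp ((a + b) / 2) = Real.exp (a / 2) * Real.exp (b / 2) := by
    rw [← Real.exp_add]; ring_nf
  nlinarith

lemma quadForm_nonneg {n p q : ℕ} (T : (Fin p → Bool) → Fin q → Bool)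
    (X : Matrix (Fin n) (Fin p) ℝ) (W : Matrix (Fin n) (Fin q) ℝ)
    (δ : Fin p → Bool) (u : Fin p → ℝ) : 0 ≤ quadForm T X W δ u := by
  unfold quadForm
  exact Finset.sum_nonneg fun ℓ _ => by positivity

lemma quadForm_zero {n p q : ℕ} (T : (Fin p → Bool) → Fin q → Bool)
    (X : Matrix (Fin n) (Fin p) ℝ) (W : Matrix (Fin n) (Fin q) ℝ)
    (δ : Fin p → Bool) : quadForm T X W δ 0 = 0 := by
  unfold quadForm; simp

lemma quad_bound {n p q : ℕ} (hn : 0 < n) {T : (Fin p → Bool) → Fin q → Bool}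
    {X : Matrix (Fin n) (Fin p) ℝ} {W : Matrix (Fin n) (Fin q) ℝ}
    {δ : Fin p → Bool} {κb : ℝ}
    (hne : ∃ j0, δ j0 = true) (hv : vbar n T X W δ ≤ κb) :
    0 ≤ κb ∧ ∀ u : Fin p → ℝ, (∀ j, δ j = false → u j = 0) →
      quadForm T X W δ u ≤ (n : ℝ) * κb * ∑ j, u j ^ 2 := by
  set S := {r | ∃ u : Fin p → ℝ, u ≠ 0 ∧ (∀ j, δ j = false → u j = 0) ∧
    r = quadForm T X W δ u / ((n : ℝ) * ∑ j, u j ^ 2)} with hS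
  set M : Fin q → Fin p → ℝ := fun ℓ j => ∑ i, W i ℓ * X i j with hM
  have hMu : ∀ (u : Fin p → ℝ) ℓ, (∑ i, W i ℓ * (∑ j, X i j * u j)) = ∑ j, M ℓ j * u j := by
    intro u ℓ
    simp_rw [hM, Finset.mul_sum, Finset.sum_mul]
    rw [Finset.sum_comm]
    simp_rw [mul_assoc]
  have hQle : ∀ u : Fin p → ℝ, quadForm T X W δ u ≤ (∑ ℓ, ∑ j, M ℓ j ^ 2) * ∑ j, u j ^ 2 := by
    intro u
    unfold quadForm
    rw [Finset.sum_mul]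
    refine Finset.sum_le_sum fun ℓ _ => ?_
    have h1 : (∑ i, W i ℓ * (∑ j, X i j * u j)) ^ 2 ≤ (∑ j, M ℓ j ^ 2) * ∑ j, u j ^ 2 := by
      rw [hMu u ℓ]
      exact Finset.sum_mul_sq_le_sq_mul_sq _ _ _
    split
    · exact h1
    · positivity
  have hsumpos : ∀ u : Fin p → ℝ, u ≠ 0 → 0 < (n : ℝ) * ∑ j, u j ^ 2 := by
    intro u hu
    obtain ⟨j0, hj0⟩ := Function.ne_iff.1 hu
    have : 0 < ∑ j, u j ^ 2 :=
      Finset.sum_pos' (fun j _ => sq_nonneg _)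
        ⟨j0, Finset.mem_univ _, pow_two_pos_of_ne_zero hj0⟩
    positivity
  have hbdd : BddAbove S := by
    refine ⟨(∑ ℓ, ∑ j, M ℓ j ^ 2) / n, ?_⟩
    rintro r ⟨u, hu0, _, rfl⟩
    have hpos := hsumpos u hu0
    rw [div_le_div_iff₀ hpos (by exact_mod_cast hn)]
    calc quadForm T X W δ u * n ≤ ((∑ ℓ, ∑ j, M ℓ j ^ 2) * ∑ j, u j ^ 2) * n :=
          mul_le_mul_of_nonneg_right (hQle u) (by positivity)
      _ = (∑ ℓ, ∑ j, M ℓ j ^ 2) * ((n : ℝ) * ∑ j, u j ^ 2) := by ring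
  have hmem_le : ∀ u : Fin p → ℝ, u ≠ 0 → (∀ j, δ j = false → u j = 0) →
      quadForm T X W δ u / ((n : ℝ) * ∑ j, u j ^ 2) ≤ κb := by
    intro u hu0 hsupp
    exact le_trans (le_csSup hbdd ⟨u, hu0, hsupp, rfl⟩) hv
  obtain ⟨j0, hj0⟩ := hne
  have hκb : 0 ≤ κb := by
    set u : Fin p → ℝ := fun j => if j = j0 then 1 else 0 with hu
    have hu0 : u ≠ 0 := by
      intro h
      have := congrFun h j0
      simp [hu] at this
    have hsupp : ∀ j, δ j = false → u j = 0 := by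
      intro j hj
      simp only [hu]
      split
      · next h => rw [h] at hj; rw [hj0] at hj; exact absurd hj (by simp)
      · rfl
    refine le_trans ?_ (hmem_le u hu0 hsupp)
    exact div_nonneg (quadForm_nonneg _ _ _ _ _) (hsumpos u hu0).le
  refine ⟨hκb, fun u hsupp => ?_⟩
  by_cases hu0 : u = 0
  · subst hu0
    rw [quadForm_zero]
    simp
  · have hle := hmem_le u hu0 hsupp
    have hpos := hsumpos u hu0
    calc quadForm T X W δ u = quadForm T X W δ u / ((n : ℝ) * ∑ j, u j ^ 2) *
          ((n : ℝ) * ∑ j, u j ^ 2) := by rw [div_mul_cancel₀ _ hpos.ne']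
      _ ≤ κb * ((n : ℝ) * ∑ j, u j ^ 2) := mul_le_mul_of_nonneg_right hle hpos.le
      _ = (n : ℝ) * κb * ∑ j, u j ^ 2 := by ring

lemma integral_lb (n p q : ℕ) (hn : 0 < n) {lam ρ γ κb : ℝ}
    (hlam : 0 < lam) (hρ : 0 < ρ) (hγ : 0 < γ)
    (T : (Fin p → Bool) → Fin q → Bool) (θs : Fin p → ℝ)
    (y : Fin n → ℝ) (X : Matrix (Fin n) (Fin p) ℝ) (W : Matrix (Fin n) (Fin q) ℝ)
    (δ : Fin p → Bool) (hδθ : ∀ j, δ j = false → θs j = 0)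
    (hvbar : vbar n T X W δ ≤ κb) :
    qlik lam T y X W δ θs * Real.exp (-(ρ ^ 2 / 2) * ∑ j, θs j ^ 2) *
      (ρ ^ 2 / ((n : ℝ) * κb / lam + ρ ^ 2)) ^ ((card0 δ : ℝ) / 2)
    ≤ ∫ θ : Fin p → ℝ, qlik lam T y X W δ (restr δ θ) * gdens ρ γ δ θ := by
  classical
  by_cases hall : ∀ j, δ j = false
  · -- trivial case : empty support
    have hθ0 : ∀ j, θs j = 0 := fun j => hδθ j (hall j)
    have hcard : card0 δ = 0 := by
      unfold card0
      rw [Finset.card_eq_zero, Finset.filter_eq_empty_iff]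
      intro j _
      simp [hall j]
    have h1 : (ρ ^ 2 / ((n : ℝ) * κb / lam + ρ ^ 2)) ^ ((card0 δ : ℝ) / 2) = 1 := by
      rw [hcard]
      norm_num
    have h2 : Real.exp (-(ρ ^ 2 / 2) * ∑ j, θs j ^ 2) = 1 := by
      simp [hθ0]
    have h3 : ∀ θ : Fin p → ℝ, restr δ θ = θs := by
      intro θ
      funext j
      simp [restr, hall j, hθ0 j]
    have h4 : (∫ θ : Fin p → ℝ, qlik lam T y X W δ (restr δ θ) * gdens ρ γ δ θ)
        = qlik lam T y X W δ θs := by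
      simp_rw [h3]
      rw [integral_const_mul, gdens_integral hρ hγ, mul_one]
    rw [h1, h2, h4, mul_one, mul_one]
  · -- main case
    push_neg at hall
    have hne : ∃ j0, δ j0 = true := by
      obtain ⟨j0, hj0⟩ := hall
      exact ⟨j0, by simpa using hj0⟩
    obtain ⟨hκb, hQ⟩ := quad_bound hn hne hvbar
    set β : ℝ := (n : ℝ) * κb / lam + ρ ^ 2 with hβdef
    have hβ : 0 < β := by positivity
    set F : (Fin p → ℝ) → ℝ :=
      fun θ => qlik lam T y X W δ (restr δ θ) * gdens ρ γ δ θ with hFdef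
    set C : ℝ := ∏ j, (Real.sqrt (2 * π * (if δ j then 1 / ρ ^ 2 else γ)))⁻¹ with hCdef
    have hC : 0 < C := Finset.prod_pos fun j _ => by
      rw [inv_pos, Real.sqrt_pos]
      split <;> positivity
    set r : Fin q → ℝ := fun ℓ => ∑ i, W i ℓ * (y i - ∑ j, X i j * θs j) with hrdef
    set R : ℝ := ∑ ℓ, if T δ ℓ then r ℓ ^ 2 else 0 with hRdef
    have hqθs : qlik lam T y X W δ θs = Real.exp (-(1 / (2 * lam)) * R) := rfl
    set m : (Fin p → ℝ) → Fin q → ℝ :=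
      fun h ℓ => ∑ i, W i ℓ * (∑ j, X i j * restr δ h j) with hmdef
    set g : Fin p → ℝ → ℝ := fun j x =>
      (Real.sqrt (2 * π * (if δ j then 1 / ρ ^ 2 else γ)))⁻¹ *
        Real.exp (if δ j then -(β / 2) * x ^ 2 else -(1 / (2 * γ)) * x ^ 2) with hgdef
    set G : (Fin p → ℝ) → ℝ := fun h => ∏ j, g j (h j) with hGdef
    set c : ℝ := Real.exp (-(1 / (2 * lam)) * R) *
      Real.exp (-(ρ ^ 2 / 2) * ∑ j, θs j ^ 2) with hcdef
    have hrestr : ∀ (ε : ℝ) (h : Fin p → ℝ),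
        restr δ (fun j => θs j + ε * h j) = fun j => θs j + ε * restr δ h j := by
      intro ε h
      funext j
      by_cases hj : δ j = true
      · simp [restr, hj]
      · have hj' : δ j = false := by simpa using hj
        simp [restr, hj', hδθ j hj']
    have hFval : ∀ (ε : ℝ) (h : Fin p → ℝ), F (fun j => θs j + ε * h j) =
        C * Real.exp (-(1 / (2 * lam)) *
            (∑ ℓ, if T δ ℓ then (r ℓ - ε * m h ℓ) ^ 2 else 0)
          + ∑ j, -((θs j + ε * h j) ^ 2) / (2 * (if δ j then 1 / ρ ^ 2 else γ))) := by
      intro ε h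
      have h2 : ∀ ℓ, (∑ i, W i ℓ * (y i - ∑ j, X i j * (θs j + ε * restr δ h j)))
          = r ℓ - ε * m h ℓ := by
        intro ℓ
        simp only [hrdef, hmdef]
        rw [Finset.mul_sum, ← Finset.sum_sub_distrib]
        refine Finset.sum_congr rfl fun i _ => ?_
        have h3 : (∑ j, X i j * (θs j + ε * restr δ h j))
            = (∑ j, X i j * θs j) + ε * ∑ j, X i j * restr δ h j := by
          rw [Finset.mul_sum, ← Finset.sum_add_distrib]
          exact Finset.sum_congr rfl fun j _ => by ring
        rw [h3]
        ring
      have h4 : qlik lam T y X W δ (fun j => θs j + ε * restr δ h j)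
          = Real.exp (-(1 / (2 * lam)) *
              ∑ ℓ, if T δ ℓ then (r ℓ - ε * m h ℓ) ^ 2 else 0) := by
        unfold qlik
        refine congrArg Real.exp (congrArg (fun t => -(1 / (2 * lam)) * t)
          (Finset.sum_congr rfl fun ℓ _ => ?_))
        by_cases hT : T δ ℓ = true
        · simp only [hT, if_true, h2 ℓ]
        · simp only [hT, Bool.false_eq_true, if_false]
      simp only [hFdef]
      rw [hrestr ε h, h4]
      rw [gdens_eq]
      rw [← hCdef, Real.exp_add]
      ring
    have hquad : ∀ h : Fin p → ℝ,
        quadForm T X W δ (restr δ h) = ∑ ℓ, if T δ ℓ then m h ℓ ^ 2 else 0 := fun h => rfl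
    have key : ∀ h : Fin p → ℝ, c * G h ≤ (F (θs + h) + F (θs - h)) / 2 := by
      intro h
      have e1 : θs + h = fun j => θs j + 1 * h j := by
        funext j
        simp
      have e2 : θs - h = fun j => θs j + (-1) * h j := by
        funext j
        simp only [Pi.sub_apply]
        ring
      have hsum1 : (∑ ℓ, if T δ ℓ then (r ℓ - 1 * m h ℓ) ^ 2 else 0)
          + (∑ ℓ, if T δ ℓ then (r ℓ - (-1) * m h ℓ) ^ 2 else 0)
          = 2 * R + 2 * quadForm T X W δ (restr δ h) := by
        rw [hquad h, hRdef, Finset.mul_sum, Finset.mul_sum,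
          ← Finset.sum_add_distrib, ← Finset.sum_add_distrib]
        refine Finset.sum_congr rfl fun ℓ _ => ?_
        by_cases hT : T δ ℓ = true
        · simp only [hT, if_true]
          ring
        · simp only [hT, Bool.false_eq_true, if_false]
          ring
      have hsum2 : (∑ j, -((θs j + 1 * h j) ^ 2) / (2 * (if δ j then 1 / ρ ^ 2 else γ)))
          + (∑ j, -((θs j + (-1) * h j) ^ 2) / (2 * (if δ j then 1 / ρ ^ 2 else γ)))
          = 2 * ∑ j, -((θs j ^ 2 + h j ^ 2)) / (2 * (if δ j then 1 / ρ ^ 2 else γ)) := by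
        rw [Finset.mul_sum, ← Finset.sum_add_distrib]
        exact Finset.sum_congr rfl fun j _ => by ring
      have hstep : ∀ j, -((θs j ^ 2 + h j ^ 2)) / (2 * (if δ j then 1 / ρ ^ 2 else γ))
          = -(ρ ^ 2 / 2) * θs j ^ 2
            + (if δ j then -(β / 2) * h j ^ 2 else -(1 / (2 * γ)) * h j ^ 2)
            + ((n : ℝ) * κb / (2 * lam)) * (restr δ h j) ^ 2 := by
        intro j
        by_cases hj : δ j = true
        · simp only [hj, if_true, restr]
          rw [hβdef]
          have hρ' : ρ ≠ 0 := ne_of_gt hρ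
          have hlam' : lam ≠ 0 := ne_of_gt hlam
          field_simp
          ring
        · have hj' : δ j = false := by simpa using hj
          simp only [restr, hj', Bool.false_eq_true, if_false, hδθ j hj']
          ring
      have hsumstep : (∑ j, -((θs j ^ 2 + h j ^ 2)) / (2 * (if δ j then 1 / ρ ^ 2 else γ)))
          = -(ρ ^ 2 / 2) * (∑ j, θs j ^ 2)
            + (∑ j, (if δ j then -(β / 2) * h j ^ 2 else -(1 / (2 * γ)) * h j ^ 2))
            + ((n : ℝ) * κb / (2 * lam)) * ∑ j, (restr δ h j) ^ 2 := by
        rw [Finset.mul_sum, Finset.mul_sum, ← Finset.sum_add_distrib, ← Finset.sum_add_distrib]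
        exact Finset.sum_congr rfl fun j _ => hstep j
      have hL : quadForm T X W δ (restr δ h) ≤ (n : ℝ) * κb * ∑ j, (restr δ h j) ^ 2 :=
        hQ (restr δ h) (fun j hj => by simp [restr, hj])
      have hGh : c * G h = C * Real.exp ((-(1 / (2 * lam)) * R)
          + (-(ρ ^ 2 / 2) * ∑ j, θs j ^ 2)
          + ∑ j, (if δ j then -(β / 2) * h j ^ 2 else -(1 / (2 * γ)) * h j ^ 2)) := by
        rw [hcdef]
        simp only [hGdef, hgdef]
        rw [Finset.prod_mul_distrib, ← hCdef, ← Real.exp_sum]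
        rw [Real.exp_add, Real.exp_add]
        ring
      have hE0L : (-(1 / (2 * lam)) * R) + (-(ρ ^ 2 / 2) * ∑ j, θs j ^ 2)
            + (∑ j, (if δ j then -(β / 2) * h j ^ 2 else -(1 / (2 * γ)) * h j ^ 2))
          ≤ -(1 / (2 * lam)) * (R + quadForm T X W δ (restr δ h))
            + ∑ j, -((θs j ^ 2 + h j ^ 2)) / (2 * (if δ j then 1 / ρ ^ 2 else γ)) := by
        rw [hsumstep]
        have hpos : (0:ℝ) < 1 / (2 * lam) := by positivity
        have hdiff := mul_le_mul_of_nonneg_left hL hpos.le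
        rw [← sub_nonneg]
        have heq : (-(1 / (2 * lam)) * (R + quadForm T X W δ (restr δ h))
              + (-(ρ ^ 2 / 2) * (∑ j, θs j ^ 2)
                + (∑ j, (if δ j then -(β / 2) * h j ^ 2 else -(1 / (2 * γ)) * h j ^ 2))
                + ((n : ℝ) * κb / (2 * lam)) * ∑ j, (restr δ h j) ^ 2))
            - ((-(1 / (2 * lam)) * R) + (-(ρ ^ 2 / 2) * ∑ j, θs j ^ 2)
              + (∑ j, (if δ j then -(β / 2) * h j ^ 2 else -(1 / (2 * γ)) * h j ^ 2)))
            = 1 / (2 * lam) * (((n : ℝ) * κb * ∑ j, (restr δ h j) ^ 2)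
              - quadForm T X W δ (restr δ h)) := by ring
        rw [heq]
        exact mul_nonneg hpos.le (by linarith [hL])
      have main : ∀ A B L E : ℝ, A + B = 2 * E → L ≤ E →
          C * Real.exp L ≤ (C * Real.exp A + C * Real.exp B) / 2 := by
        intro A B L E hABE hLE
        have h1 : Real.exp L ≤ Real.exp ((A + B) / 2) := by
          rw [Real.exp_le_exp, hABE]
          linarith
        have h3 := mul_le_mul_of_nonneg_left h1 hC.le
        have h4 := mul_le_mul_of_nonneg_left (exp_avg A B) hC.le
        linarith
      rw [e1, e2, hFval 1 h, hFval (-1) h, hGh]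
      refine main _ _ _ _ ?_ hE0L
      linear_combination (-(1 / (2 * lam))) * hsum1 + hsum2
    have hFcont : Continuous F := by
      rw [hFdef]
      unfold qlik gdens gpdf restr
      have hres : ∀ j, Continuous fun θ : Fin p → ℝ => (if δ j then θ j else (0:ℝ)) := by
        intro j
        by_cases hj : δ j = true
        · simpa [hj] using continuous_apply j
        · simp only [hj]
          exact continuous_const
      have hinner : ∀ ℓ, Continuous fun θ : Fin p → ℝ =>
          (∑ i, W i ℓ * (y i - ∑ j, X i j * (if δ j then θ j else 0))) := fun ℓ =>
        continuous_finset_sum _ fun i _ => continuous_const.mul (continuous_const.sub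
          (continuous_finset_sum _ fun j _ => continuous_const.mul (hres j)))
      have hsum : Continuous fun θ : Fin p → ℝ =>
          ∑ ℓ, if T δ ℓ then
            (∑ i, W i ℓ * (y i - ∑ j, X i j * (if δ j then θ j else 0))) ^ 2 else 0 :=
        continuous_finset_sum _ fun ℓ _ => by
          by_cases hℓ : T δ ℓ = true
          · simp only [hℓ, ↓reduceIte]
            exact (hinner ℓ).pow 2
          · simp only [hℓ]
            exact continuous_const
      exact (Real.continuous_exp.comp (continuous_const.mul hsum)).mul
        (continuous_finset_prod _ fun j _ =>
          (Real.continuous_exp.comp (((continuous_apply j).pow 2).neg.div_const _)).div_const _)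
    have hFint : Integrable F := by
      refine (gdens_integrable hρ hγ δ).mono' hFcont.aestronglyMeasurable
        (Filter.Eventually.of_forall fun θ => ?_)
      rw [hFdef]
      simp only [Real.norm_eq_abs]
      rw [abs_of_nonneg (mul_nonneg (qlik_pos _ _ _ _ _ _ _).le (gdens_nonneg _ _ _ _))]
      exact mul_le_of_le_one_left (gdens_nonneg _ _ _ _) (qlik_le_one hlam _ _ _ _ _ _)
    have hgint : ∀ j, Integrable (g j) := by
      intro j
      rw [hgdef]
      by_cases hj : δ j = true
      · simp only [hj, if_true]
        exact (integrable_exp_neg_mul_sq (by positivity : (0:ℝ) < β / 2)).const_mul _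
      · simp only [hj, Bool.false_eq_true, if_false]
        exact (integrable_exp_neg_mul_sq (by positivity : (0:ℝ) < 1 / (2 * γ))).const_mul _
    have hGint : Integrable G := by
      rw [hGdef]
      exact Integrable.fintype_prod (f := g) hgint
    have hGval : ∫ h : Fin p → ℝ, G h = Real.sqrt (ρ ^ 2 / β) ^ card0 δ := by
      have hgj : ∀ j, (∫ x : ℝ, g j x) = if δ j then Real.sqrt (ρ ^ 2 / β) else 1 := by
        intro j
        simp only [hgdef]
        by_cases hj : δ j = true
        · simp only [hj, if_true]
          rw [integral_const_mul, integral_gaussian]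
          rw [← Real.sqrt_inv, ← Real.sqrt_mul (by positivity)]
          congr 1
          have hπ := Real.pi_ne_zero
          have hβ' : β ≠ 0 := ne_of_gt hβ
          have hρ' : ρ ≠ 0 := ne_of_gt hρ
          field_simp
        · simp only [hj, Bool.false_eq_true, if_false]
          rw [integral_const_mul]
          rw [integral_gaussian, show π / (1 / (2 * γ)) = 2 * π * γ by field_simp]
          rw [inv_mul_cancel₀ (by positivity : Real.sqrt (2 * π * γ) ≠ 0)]
      simp only [hGdef]
      rw [integral_fintype_prod_volume_eq_prod (f := g)]
      simp_rw [hgj]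
      rw [Finset.prod_ite, Finset.prod_const, Finset.prod_const_one, mul_one]
      rfl
    have hFadd : Integrable fun h : Fin p → ℝ => F (θs + h) := hFint.comp_add_left θs
    have hFsub : Integrable fun h : Fin p → ℝ => F (θs - h) := by
      have h1 := (hFint.comp_add_left θs).comp_neg
      have h2 : (fun h : Fin p → ℝ => F (θs + -h)) = fun h => F (θs - h) := by
        funext h
        rw [sub_eq_add_neg]
      rwa [h2] at h1
    have hIF : (∫ θ : Fin p → ℝ, F θ) = ∫ h : Fin p → ℝ, (F (θs + h) + F (θs - h)) / 2 := by
      have e1 : ∫ h : Fin p → ℝ, F (θs + h) = ∫ θ : Fin p → ℝ, F θ :=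
        integral_add_left_eq_self F θs
      have e2 : ∫ h : Fin p → ℝ, F (θs - h) = ∫ θ : Fin p → ℝ, F θ := by
        have h2 : (fun h : Fin p → ℝ => F (θs + -h)) = fun h => F (θs - h) := by
          funext h
          rw [sub_eq_add_neg]
        rw [← h2] at *
        rw [integral_neg_eq_self (fun h : Fin p → ℝ => F (θs + h)) volume]
        exact e1
      rw [show (fun h : Fin p → ℝ => (F (θs + h) + F (θs - h)) / 2)
          = fun h => (F (θs + h) + F (θs - h)) * (2:ℝ)⁻¹ by funext h; rw [div_eq_mul_inv]]
      rw [integral_mul_const, integral_add hFadd hFsub, e1, e2]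
      ring
    have hrpow : (ρ ^ 2 / β) ^ ((card0 δ : ℝ) / 2) = Real.sqrt (ρ ^ 2 / β) ^ card0 δ := by
      have hx : (0:ℝ) ≤ ρ ^ 2 / β := by positivity
      rw [show ((card0 δ : ℝ)) / 2 = (1 / 2 : ℝ) * (card0 δ : ℝ) by ring,
        Real.rpow_mul hx, Real.rpow_natCast, ← Real.sqrt_eq_rpow]
    calc qlik lam T y X W δ θs * Real.exp (-(ρ ^ 2 / 2) * ∑ j, θs j ^ 2) *
          (ρ ^ 2 / β) ^ ((card0 δ : ℝ) / 2)
        = c * Real.sqrt (ρ ^ 2 / β) ^ card0 δ := by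
          rw [hqθs, hcdef, hrpow]
      _ = c * ∫ h : Fin p → ℝ, G h := by rw [hGval]
      _ = ∫ h : Fin p → ℝ, c * G h := (integral_const_mul c G).symm
      _ ≤ ∫ h : Fin p → ℝ, (F (θs + h) + F (θs - h)) / 2 :=
          integral_mono (hGint.const_mul c) ((hFadd.add hFsub).div_const 2) key
      _ = ∫ θ : Fin p → ℝ, F θ := hIF.symm

/-- Lemma on the normalizing constant: under H1–H2, for every
`z = (y,X,W)` in the event `𝓔`, the normalizing constant
`Č_γ(z) = Σ_δ ω_δ ∫ q_{δ,θ_δ}(z) N(0,B_δ)(dθ)` satisfies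
`Č_γ(z) ≥ ω_{δ⋆} q_{δ⋆,θ⋆}(z) e^{−(ρ²/2)‖θ⋆‖₂²} (ρ²/(nκ̄/λ + ρ²))^{s⋆/2}`. -/
theorem stmt1 (n p q sbar : ℕ) (hn : 0 < n) (hp : 2 ≤ p)
    (u lam ρ γ σ0 κ1 κb κl : ℝ)
    (hu : 0 < u) (hlam : 0 < lam) (hρ : 0 < ρ) (hγ : 0 < γ)
    (T : (Fin p → Bool) → Fin q → Bool) (θs : Fin p → ℝ)
    (hsbar : card0 (deltaStar θs) ≤ sbar)
    (y : Fin n → ℝ) (X : Matrix (Fin n) (Fin p) ℝ) (W : Matrix (Fin n) (Fin q) ℝ)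
    (hE : eventE n p q sbar σ0 κ1 κb κl T θs y X W) :
    (∑ δ : Fin p → Bool, priorOmega p sbar u δ *
        ∫ θ : Fin p → ℝ, qlik lam T y X W δ (restr δ θ) * gdens ρ γ δ θ)
      ≥ priorOmega p sbar u (deltaStar θs) * qlik lam T y X W (deltaStar θs) θs *
          Real.exp (-(ρ ^ 2 / 2) * ∑ j, θs j ^ 2) *
          (ρ ^ 2 / ((n : ℝ) * κb / lam + ρ ^ 2)) ^ ((card0 (deltaStar θs) : ℝ) / 2) := by
  classical
  set ds := deltaStar θs with hds
  have hδθ : ∀ j, ds j = false → θs j = 0 := by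
    intro j hj
    rw [hds] at hj
    unfold deltaStar at hj
    simpa using of_decide_eq_false hj
  have hIlb := integral_lb n p q hn hlam hρ hγ T θs y X W ds hδθ hE.2.1
  have hωnn : ∀ δ : Fin p → Bool, 0 ≤ priorOmega p sbar u δ := by
    intro δ
    unfold priorOmega priorw
    have hq1 : (0:ℝ) ≤ (p : ℝ) ^ (-(1 + u)) :=
      (Real.rpow_pos_of_pos (by positivity) _).le
    have hq2 : (p : ℝ) ^ (-(1 + u)) ≤ 1 :=
      Real.rpow_le_one_of_one_le_of_nonpos (by exact_mod_cast le_trans (by norm_num : (1:ℕ) ≤ 2) hp)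
        (by linarith)
    have hnum : ∀ δ' : Fin p → Bool, 0 ≤ if card0 δ' ≤ sbar then
        ((p : ℝ) ^ (-(1 + u))) ^ (card0 δ') * (1 - (p : ℝ) ^ (-(1 + u))) ^ (p - card0 δ')
        else (0:ℝ) := by
      intro δ'
      split
      · have : (0:ℝ) ≤ 1 - (p : ℝ) ^ (-(1 + u)) := by linarith
        positivity
      · exact le_refl 0
    exact div_nonneg (hnum δ) (Finset.sum_nonneg fun δ' _ => hnum δ')
  have hInn : ∀ δ : Fin p → Bool,
      0 ≤ ∫ θ : Fin p → ℝ, qlik lam T y X W δ (restr δ θ) * gdens ρ γ δ θ := by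
    intro δ
    exact integral_nonneg fun θ => mul_nonneg (qlik_pos _ _ _ _ _ _ _).le (gdens_nonneg _ _ _ _)
  have hsum : priorOmega p sbar u ds *
        ∫ θ : Fin p → ℝ, qlik lam T y X W ds (restr ds θ) * gdens ρ γ ds θ
      ≤ ∑ δ : Fin p → Bool, priorOmega p sbar u δ *
        ∫ θ : Fin p → ℝ, qlik lam T y X W δ (restr δ θ) * gdens ρ γ δ θ :=
    Finset.single_le_sum (f := fun δ => priorOmega p sbar u δ *
        ∫ θ : Fin p → ℝ, qlik lam T y X W δ (restr δ θ) * gdens ρ γ δ θ)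
      (fun δ _ => mul_nonneg (hωnn δ) (hInn δ)) (Finset.mem_univ ds)
  refine le_trans ?_ hsum
  calc priorOmega p sbar u ds * qlik lam T y X W ds θs *
        Real.exp (-(ρ ^ 2 / 2) * ∑ j, θs j ^ 2) *
        (ρ ^ 2 / ((n : ℝ) * κb / lam + ρ ^ 2)) ^ ((card0 ds : ℝ) / 2)
      = priorOmega p sbar u ds * (qlik lam T y X W ds θs *
        Real.exp (-(ρ ^ 2 / 2) * ∑ j, θs j ^ 2) *
        (ρ ^ 2 / ((n : ℝ) * κb / lam + ρ ^ 2)) ^ ((card0 ds : ℝ) / 2)) := by ring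
    _ ≤ priorOmega p sbar u ds *
        ∫ θ : Fin p → ℝ, qlik lam T y X W ds (restr ds θ) * gdens ρ γ ds θ :=
      mul_le_mul_of_nonneg_left hIlb (hωnn ds)
end

section
/- Let δ ∈ {0,1}^p, θ⋆ ∈ ℝ^p, ρ > 0, and r > 0. Let μ_δ denote the product measure on ℝ^p whose j-th factor is the Dirac mass at 0 if δ_j = 0 and Lebesgue measure if δ_j = 1. Then ∫_{{θ ∈ ℝ^p : ‖θ − θ⋆‖₂ ≤ r}} exp(−(ρ²/2)(‖θ‖₂² − ‖θ⋆‖₂²)) μ_δ(dθ) ≤ e^{ρ² ‖θ⋆‖₂ r} (2π/ρ²)^{‖δ‖₀/2}. -/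
open MeasureTheory Real

/-- `μ_δ`: the product measure on `ℝ^p` whose `j`-th factor is Lebesgue measure if
`δ_j = 1` and the Dirac mass at `0` if `δ_j = 0`. -/
noncomputable def muDelta {p : ℕ} (δ : Fin p → Bool) : Measure (Fin p → ℝ) :=
  Measure.pi fun j => if δ j then (volume : Measure ℝ) else Measure.dirac 0

lemma pi_integral_prod {p : ℕ} (μ : Fin p → Measure ℝ) [h : ∀ j, SigmaFinite (μ j)]
    (f : Fin p → ℝ → ℝ) :
    ∫ x : Fin p → ℝ, ∏ j, f j (x j) ∂(Measure.pi μ) = ∏ j, ∫ x, f j x ∂(μ j) :=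
  integral_fintype_prod_eq_prod (E := fun _ => ℝ) f (μ := μ)

lemma pi_integrable_prod {p : ℕ} (μ : Fin p → Measure ℝ) [h : ∀ j, SigmaFinite (μ j)]
    {f : Fin p → ℝ → ℝ} (hf : ∀ j, Integrable (f j) (μ j)) :
    Integrable (fun x : Fin p → ℝ => ∏ j, f j (x j)) (Measure.pi μ) :=
  Integrable.fintype_prod_dep (E := fun _ => ℝ) (μ := μ) hf

lemma integrable_dirac'' {f : ℝ → ℝ} (hf : Measurable f) (a : ℝ) :
    Integrable f (Measure.dirac a) := by
  refine ⟨hf.aestronglyMeasurable, ?_⟩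
  simp [HasFiniteIntegral, lintegral_dirac]

/-- `∫_{‖θ−θ⋆‖₂ ≤ r} e^{−(ρ²/2)(‖θ‖₂²−‖θ⋆‖₂²)} μ_δ(dθ) ≤ e^{ρ²‖θ⋆‖₂ r} (2π/ρ²)^{‖δ‖₀/2}`. -/
theorem stmt11 (p : ℕ) (δ : Fin p → Bool) (θs : Fin p → ℝ) (ρ r : ℝ)
    (hρ : 0 < ρ) (hr : 0 < r) :
    (∫ θ in {θ : Fin p → ℝ | Real.sqrt (∑ j, (θ j - θs j) ^ 2) ≤ r},
        Real.exp (-(ρ ^ 2 / 2) * ((∑ j, θ j ^ 2) - ∑ j, θs j ^ 2)) ∂(muDelta δ))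
      ≤ Real.exp (ρ ^ 2 * Real.sqrt (∑ j, θs j ^ 2) * r)
          * (2 * Real.pi / ρ ^ 2) ^ ((card0 δ : ℝ) / 2) := by
  classical
  have hmu : muDelta δ = Measure.pi (fun j => if δ j then (volume : Measure ℝ)
      else Measure.dirac 0) := rfl
  rw [hmu]
  set ν : Fin p → Measure ℝ := fun j => if δ j then (volume : Measure ℝ) else Measure.dirac 0
    with hν
  haveI hsf : ∀ j, SigmaFinite (ν j) := by
    intro j
    by_cases h : δ j
    · rw [show ν j = volume by simp [hν, h]]; infer_instance
    · rw [show ν j = Measure.dirac 0 by simp [hν, h]]; infer_instance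
  set b : ℝ := ρ ^ 2 / 2 with hbdef
  have hb : 0 < b := by rw [hbdef]; positivity
  set B : ℝ := ∑ j, θs j ^ 2 with hBdef
  have hBnn : 0 ≤ B := Finset.sum_nonneg fun j _ => sq_nonneg _
  set C : ℝ := ρ ^ 2 * Real.sqrt B * r with hCdef
  set S : Set (Fin p → ℝ) := {θ : Fin p → ℝ | Real.sqrt (∑ j, (θ j - θs j) ^ 2) ≤ r} with hSdef
  -- the Gaussian dominating function
  have hfac : ∀ j, Integrable (fun x : ℝ => Real.exp (-b * (x - θs j) ^ 2)) (ν j) := by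
    intro j
    by_cases h : δ j
    · rw [show ν j = volume by simp [hν, h]]
      exact (integrable_exp_neg_mul_sq hb).comp_sub_right (θs j)
    · rw [show ν j = Measure.dirac 0 by simp [hν, h]]
      exact integrable_dirac'' (by fun_prop) 0
  have hGint : Integrable (fun θ : Fin p → ℝ => ∏ j, Real.exp (-b * (θ j - θs j) ^ 2))
      (Measure.pi ν) := pi_integrable_prod ν hfac
  have hgexp : ∀ θ : Fin p → ℝ,
      ∏ j, Real.exp (-b * (θ j - θs j) ^ 2) = Real.exp (-b * ∑ j, (θ j - θs j) ^ 2) := by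
    intro θ
    rw [← Real.exp_sum, Finset.mul_sum]
  -- pointwise bound on S
  have hbound : ∀ θ ∈ S, Real.exp (-b * ((∑ j, θ j ^ 2) - B))
      ≤ Real.exp C * ∏ j, Real.exp (-b * (θ j - θs j) ^ 2) := by
    intro θ hθ
    rw [hgexp, ← Real.exp_add]
    apply Real.exp_le_exp.mpr
    have hDr : Real.sqrt (∑ j, (θ j - θs j) ^ 2) ≤ r := hθ
    set D : ℝ := ∑ j, (θ j - θs j) ^ 2 with hDdef
    have hDnn : 0 ≤ D := Finset.sum_nonneg fun j _ => sq_nonneg _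
    set I : ℝ := ∑ j, θs j * (θ j - θs j) with hIdef
    have hid : (∑ j, θ j ^ 2) - B = D + 2 * I := by
      rw [hBdef, hDdef, hIdef, Finset.mul_sum, ← Finset.sum_add_distrib,
        ← Finset.sum_sub_distrib]
      exact Finset.sum_congr rfl fun j _ => by ring
    have hcs : I ^ 2 ≤ B * D := by
      rw [hIdef, hBdef, hDdef]
      exact Finset.sum_mul_sq_le_sq_mul_sq _ _ _
    have habs : -I ≤ Real.sqrt B * r := by
      have h1 : |I| ≤ Real.sqrt B * Real.sqrt D := by
        rw [← Real.sqrt_sq_eq_abs, ← Real.sqrt_mul hBnn]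
        exact Real.sqrt_le_sqrt hcs
      have h2 : Real.sqrt B * Real.sqrt D ≤ Real.sqrt B * r :=
        mul_le_mul_of_nonneg_left hDr (Real.sqrt_nonneg _)
      linarith [neg_abs_le I]
    have hI' : -(ρ ^ 2) * I ≤ ρ ^ 2 * (Real.sqrt B * r) := by
      have hρ2 : (0:ℝ) ≤ ρ ^ 2 := sq_nonneg _
      have := mul_le_mul_of_nonneg_left habs hρ2
      linarith
    rw [hid, hCdef, hbdef]
    nlinarith [hI']
  -- measurability / integrability
  have hScont : Continuous fun θ : Fin p → ℝ => Real.sqrt (∑ j, (θ j - θs j) ^ 2) := by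
    fun_prop
  have hSmeas : MeasurableSet S := measurableSet_le hScont.measurable measurable_const
  have hfm : AEStronglyMeasurable (fun θ : Fin p → ℝ => Real.exp (-b * ((∑ j, θ j ^ 2) - B)))
      ((Measure.pi ν).restrict S) := by
    apply Continuous.aestronglyMeasurable
    fun_prop
  have hGint' : Integrable
      (fun θ : Fin p → ℝ => Real.exp C * ∏ j, Real.exp (-b * (θ j - θs j) ^ 2))
      (Measure.pi ν) := hGint.const_mul _
  have hfint : IntegrableOn (fun θ : Fin p → ℝ => Real.exp (-b * ((∑ j, θ j ^ 2) - B))) S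
      (Measure.pi ν) := by
    apply Integrable.mono' hGint'.integrableOn hfm
    filter_upwards [ae_restrict_mem hSmeas] with θ hθ
    rw [Real.norm_eq_abs, abs_of_nonneg (Real.exp_pos _).le]
    exact hbound θ hθ
  have step1 : (∫ θ in S, Real.exp (-b * ((∑ j, θ j ^ 2) - B)) ∂(Measure.pi ν))
      ≤ ∫ θ in S, Real.exp C * ∏ j, Real.exp (-b * (θ j - θs j) ^ 2) ∂(Measure.pi ν) :=
    setIntegral_mono_on hfint hGint'.integrableOn hSmeas hbound
  have step2 : (∫ θ in S, Real.exp C * ∏ j, Real.exp (-b * (θ j - θs j) ^ 2) ∂(Measure.pi ν))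
      ≤ ∫ θ, Real.exp C * ∏ j, Real.exp (-b * (θ j - θs j) ^ 2) ∂(Measure.pi ν) :=
    setIntegral_le_integral hGint' (Filter.Eventually.of_forall fun θ => by positivity)
  have step3 : (∫ θ, Real.exp C * ∏ j, Real.exp (-b * (θ j - θs j) ^ 2) ∂(Measure.pi ν))
      = Real.exp C * ∏ j, ∫ x, Real.exp (-b * (x - θs j) ^ 2) ∂(ν j) := by
    rw [integral_const_mul, pi_integral_prod ν (fun j x => Real.exp (-b * (x - θs j) ^ 2))]
  have hfacle : ∀ j, (∫ x, Real.exp (-b * (x - θs j) ^ 2) ∂(ν j))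
      ≤ (if δ j then Real.sqrt (2 * π / ρ ^ 2) else 1) := by
    intro j
    by_cases h : δ j
    · rw [show ν j = volume by simp [hν, h], if_pos h]
      rw [integral_sub_right_eq_self (fun x => Real.exp (-b * x ^ 2)) (θs j), integral_gaussian]
      apply le_of_eq
      congr 1
      rw [hbdef]
      field_simp
    · rw [show ν j = Measure.dirac 0 by simp [hν, h], if_neg h, integral_dirac]
      calc Real.exp (-b * (0 - θs j) ^ 2) ≤ Real.exp 0 := by
            apply Real.exp_le_exp.mpr
            nlinarith [sq_nonneg (0 - θs j), hb.le]
        _ = 1 := Real.exp_zero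
  have hprodle : (∏ j, ∫ x, Real.exp (-b * (x - θs j) ^ 2) ∂(ν j))
      ≤ ∏ j, (if δ j then Real.sqrt (2 * π / ρ ^ 2) else 1) :=
    Finset.prod_le_prod (fun j _ => integral_nonneg fun x => (Real.exp_pos _).le)
      (fun j _ => hfacle j)
  have hx : (0:ℝ) ≤ 2 * π / ρ ^ 2 := by positivity
  have hprodeq : (∏ j, (if δ j then Real.sqrt (2 * π / ρ ^ 2) else (1:ℝ)))
      = (2 * π / ρ ^ 2) ^ ((card0 δ : ℝ) / 2) := by
    rw [Finset.prod_ite, Finset.prod_const, Finset.prod_const, one_pow, mul_one]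
    rw [show (Finset.univ.filter fun j => δ j = true).card = card0 δ from rfl]
    rw [Real.sqrt_eq_rpow, ← Real.rpow_natCast ((2 * π / ρ ^ 2) ^ ((1:ℝ)/2)) (card0 δ),
      ← Real.rpow_mul hx]
    congr 1
    ring
  calc (∫ θ in S, Real.exp (-b * ((∑ j, θ j ^ 2) - B)) ∂(Measure.pi ν))
      ≤ ∫ θ, Real.exp C * ∏ j, Real.exp (-b * (θ j - θs j) ^ 2) ∂(Measure.pi ν) :=
        le_trans step1 step2
    _ = Real.exp C * ∏ j, ∫ x, Real.exp (-b * (x - θs j) ^ 2) ∂(ν j) := step3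
    _ ≤ Real.exp C * ∏ j, (if δ j then Real.sqrt (2 * π / ρ ^ 2) else 1) :=
        mul_le_mul_of_nonneg_left hprodle (Real.exp_pos _).le
    _ = Real.exp C * (2 * π / ρ ^ 2) ^ ((card0 δ : ℝ) / 2) := by rw [hprodeq]
end
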